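/- Let θ > 0, let (θ_i)_{i≥1} be a non-negative real sequence with θ_* := sup_i θ_i < ∞ and θ*' := max(θ, θ_*), and for m ∈ ℕ set δ(m,θ) := sup_{j≥0} | (1/m)·∑_{i=1}^m θ_{jm+i} − θ |. Let (y_i)_{i≥1} be a real sequence, let 0 ≤ l < n and m ≥ 1, and set ‖y‖ := max_{l<i≤n} |y_i|. Then |∑_{i=l+1}^n (θ_i − θ)·y_i| ≤ 2mθ*'·‖y‖ + δ(m,θ)·∑_{i=1}^n |y_i| + m^{−1}·θ_*·∑_{l'=1}^m ∑_{l''=1}^m ∑_{j=1}^{⌊n/m⌋−1} |y_{jm+l'} − y_{jm+l''}|. -/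

import Mathlib

open Finset

private lemma sum_shift (f : ℕ → ℝ) (a m : ℕ) :
    ∑ i ∈ Icc 1 m, f (a + i) = ∑ i ∈ Ioc a (a + m), f i := by
  induction m with
  | zero => simp
  | succ m ih =>
    rw [Finset.sum_Icc_succ_top (Nat.one_le_iff_ne_zero.mpr (Nat.succ_ne_zero m)), ih,
      ← add_assoc, Finset.sum_Ioc_succ_top (Nat.le_add_right a m)]

private lemma sum_blocks (f : ℕ → ℝ) (m b k : ℕ) (hbk : b ≤ k) :
    ∑ j ∈ Ico b k, ∑ i ∈ Icc 1 m, f (j * m + i) = ∑ i ∈ Ioc (b * m) (k * m), f i := by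
  induction k, hbk using Nat.le_induction with
  | base => simp
  | succ k hbk ih =>
    rw [Finset.sum_Ico_succ_top hbk, ih, sum_shift,
      Finset.sum_Ioc_consecutive _ (Nat.mul_le_mul_right m hbk) (Nat.le_add_right _ m)]
    congr 1
    ring

private lemma block_bound (θ : ℝ) (θi y : ℕ → ℝ) (m a : ℕ) (hm : 0 < m) (Θ : ℝ)
    (hθs : ∀ i, 1 ≤ i → θi i ≤ Θ) (hnn : ∀ i, 0 ≤ θi i) (δ : ℝ)
    (hδ : |(1 / (m : ℝ)) * ∑ i ∈ Icc 1 m, θi (a + i) - θ| ≤ δ) :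
    |∑ i ∈ Icc 1 m, (θi (a + i) - θ) * y (a + i)| ≤
      δ * ∑ i ∈ Icc 1 m, |y (a + i)| +
      (m : ℝ)⁻¹ * Θ * ∑ l' ∈ Icc 1 m, ∑ l'' ∈ Icc 1 m, |y (a + l') - y (a + l'')| := by
  have hm0 : (0 : ℝ) < m := by exact_mod_cast hm
  have hcard : (Icc 1 m).card = m := by rw [Nat.card_Icc]; omega
  have h1 : ∑ l' ∈ Icc 1 m, ∑ l'' ∈ Icc 1 m, θi (a + l') * y (a + l')
      = (m : ℝ) * ∑ i ∈ Icc 1 m, θi (a + i) * y (a + i) := by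
    simp only [Finset.sum_const, hcard, nsmul_eq_mul, ← Finset.mul_sum]
  have h2 : ∑ l' ∈ Icc 1 m, ∑ l'' ∈ Icc 1 m, θ * y (a + l'')
      = (m : ℝ) * ∑ i ∈ Icc 1 m, θ * y (a + i) := by
    rw [Finset.sum_const, hcard, nsmul_eq_mul]
  have key : (m : ℝ) * ∑ i ∈ Icc 1 m, (θi (a + i) - θ) * y (a + i)
      = (∑ i ∈ Icc 1 m, (θi (a + i) - θ)) * (∑ i ∈ Icc 1 m, y (a + i))
        + ∑ l' ∈ Icc 1 m, ∑ l'' ∈ Icc 1 m, θi (a + l') * (y (a + l') - y (a + l'')) := by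
    rw [Finset.sum_mul_sum, ← Finset.sum_add_distrib]
    have hin : ∀ l' ∈ Icc 1 m,
        ((∑ l'' ∈ Icc 1 m, (θi (a + l') - θ) * y (a + l''))
          + ∑ l'' ∈ Icc 1 m, θi (a + l') * (y (a + l') - y (a + l'')))
        = ∑ l'' ∈ Icc 1 m, (θi (a + l') * y (a + l') - θ * y (a + l'')) := by
      intro l' _
      rw [← Finset.sum_add_distrib]
      exact Finset.sum_congr rfl fun l'' _ => by ring
    rw [Finset.sum_congr rfl hin]
    have hsub : ∑ l' ∈ Icc 1 m, ∑ l'' ∈ Icc 1 m, (θi (a + l') * y (a + l') - θ * y (a + l''))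
        = (∑ l' ∈ Icc 1 m, ∑ l'' ∈ Icc 1 m, θi (a + l') * y (a + l'))
          - ∑ l' ∈ Icc 1 m, ∑ l'' ∈ Icc 1 m, θ * y (a + l'') := by
      rw [← Finset.sum_sub_distrib]
      exact Finset.sum_congr rfl fun _ _ => Finset.sum_sub_distrib _ _
    rw [hsub, h1, h2, ← mul_sub, ← Finset.sum_sub_distrib]
    exact congrArg _ (Finset.sum_congr rfl fun i _ => by ring)
  have hT : |∑ i ∈ Icc 1 m, (θi (a + i) - θ)| ≤ (m : ℝ) * δ := by
    have e : ∑ i ∈ Icc 1 m, (θi (a + i) - θ)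
        = (m : ℝ) * ((1 / (m : ℝ)) * ∑ i ∈ Icc 1 m, θi (a + i) - θ) := by
      rw [Finset.sum_sub_distrib, Finset.sum_const, hcard, nsmul_eq_mul]
      field_simp
    rw [e, abs_mul, abs_of_nonneg hm0.le]
    exact mul_le_mul_of_nonneg_left hδ hm0.le
  have hB : |∑ l' ∈ Icc 1 m, ∑ l'' ∈ Icc 1 m, θi (a + l') * (y (a + l') - y (a + l''))|
      ≤ Θ * ∑ l' ∈ Icc 1 m, ∑ l'' ∈ Icc 1 m, |y (a + l') - y (a + l'')| := by
    calc |∑ l' ∈ Icc 1 m, ∑ l'' ∈ Icc 1 m, θi (a + l') * (y (a + l') - y (a + l''))|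
        ≤ ∑ l' ∈ Icc 1 m, |∑ l'' ∈ Icc 1 m, θi (a + l') * (y (a + l') - y (a + l''))| :=
          Finset.abs_sum_le_sum_abs _ _
      _ ≤ ∑ l' ∈ Icc 1 m, ∑ l'' ∈ Icc 1 m, |θi (a + l') * (y (a + l') - y (a + l''))| :=
          Finset.sum_le_sum fun _ _ => Finset.abs_sum_le_sum_abs _ _
      _ ≤ ∑ l' ∈ Icc 1 m, ∑ l'' ∈ Icc 1 m, Θ * |y (a + l') - y (a + l'')| := by
          refine Finset.sum_le_sum fun l' hl' => Finset.sum_le_sum fun l'' _ => ?_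
          rw [abs_mul, abs_of_nonneg (hnn _)]
          have h1' : 1 ≤ l' := (Finset.mem_Icc.mp hl').1
          exact mul_le_mul_of_nonneg_right (hθs (a + l') (by omega)) (abs_nonneg _)
      _ = Θ * ∑ l' ∈ Icc 1 m, ∑ l'' ∈ Icc 1 m, |y (a + l') - y (a + l'')| := by
          rw [Finset.mul_sum]
          exact Finset.sum_congr rfl fun _ _ => (Finset.mul_sum _ _ _).symm
  have habs : |∑ i ∈ Icc 1 m, (θi (a + i) - θ) * y (a + i)|
      = (m : ℝ)⁻¹ * |(m : ℝ) * ∑ i ∈ Icc 1 m, (θi (a + i) - θ) * y (a + i)| := by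
    rw [abs_mul, abs_of_nonneg hm0.le, ← mul_assoc, inv_mul_cancel₀ hm0.ne', one_mul]
  rw [habs, key]
  have hy : |(∑ i ∈ Icc 1 m, (θi (a + i) - θ)) * ∑ i ∈ Icc 1 m, y (a + i)|
      ≤ (m : ℝ) * δ * ∑ i ∈ Icc 1 m, |y (a + i)| := by
    rw [abs_mul]
    exact mul_le_mul hT ((Finset.abs_sum_le_sum_abs _ _)) (abs_nonneg _)
      (mul_nonneg hm0.le ((abs_nonneg _).trans hδ))
  calc (m : ℝ)⁻¹ * |(∑ i ∈ Icc 1 m, (θi (a + i) - θ)) * (∑ i ∈ Icc 1 m, y (a + i))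
        + ∑ l' ∈ Icc 1 m, ∑ l'' ∈ Icc 1 m, θi (a + l') * (y (a + l') - y (a + l''))|
      ≤ (m : ℝ)⁻¹ * ((m : ℝ) * δ * ∑ i ∈ Icc 1 m, |y (a + i)|
        + Θ * ∑ l' ∈ Icc 1 m, ∑ l'' ∈ Icc 1 m, |y (a + l') - y (a + l'')|) := by
        refine mul_le_mul_of_nonneg_left ?_ (inv_nonneg.mpr hm0.le)
        exact (abs_add_le _ _).trans (add_le_add hy hB)
    _ = δ * ∑ i ∈ Icc 1 m, |y (a + i)|
        + (m : ℝ)⁻¹ * Θ * ∑ l' ∈ Icc 1 m, ∑ l'' ∈ Icc 1 m, |y (a + l') - y (a + l'')| := by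
        field_simp

/-- Lemma 5.1, second inequality. Here `θ_* = ⨆_{i≥1} θᵢ`, `θ*' = max(θ, θ_*)` and
`δ(m,θ) = sup_{j≥0} |(1/m)∑_{i=1}^m θ_{jm+i} − θ|`. -/
theorem stmt4 (θ : ℝ) (hθ : 0 < θ) (θi : ℕ → ℝ) (hnn : ∀ i, 0 ≤ θi i)
    (hbdd : BddAbove (Set.range fun i => θi (i + 1)))
    (y : ℕ → ℝ) (l n m : ℕ) (hln : l < n) (hm : 1 ≤ m) :
    |∑ i ∈ Icc (l + 1) n, (θi i - θ) * y i| ≤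
      2 * m * max θ (⨆ i, θi (i + 1)) * (⨆ i ∈ Icc (l + 1) n, |y i|) +
      (⨆ j : ℕ, |(1 / (m : ℝ)) * ∑ i ∈ Icc 1 m, θi (j * m + i) - θ|) *
        ∑ i ∈ Icc 1 n, |y i| +
      (m : ℝ)⁻¹ * (⨆ i, θi (i + 1)) *
        ∑ l' ∈ Icc 1 m, ∑ l'' ∈ Icc 1 m, ∑ j ∈ Icc 1 (n / m - 1),
          |y (j * m + l') - y (j * m + l'')| := by
  have hm' : 0 < m := hm
  have hm0 : (0 : ℝ) < m := by exact_mod_cast hm'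
  set Θ : ℝ := ⨆ i, θi (i + 1) with hΘdef
  set δ : ℝ := ⨆ j : ℕ, |(1 / (m : ℝ)) * ∑ i ∈ Icc 1 m, θi (j * m + i) - θ| with hδdef
  set Y : ℝ := ⨆ i ∈ Icc (l + 1) n, |y i| with hYdef
  -- basic facts about Θ
  have hΘle : ∀ i, 1 ≤ i → θi i ≤ Θ := by
    intro i hi
    have := le_ciSup hbdd (i - 1)
    rwa [Nat.sub_add_cancel hi] at this
  have hΘ0 : 0 ≤ Θ := (hnn 1).trans (hΘle 1 le_rfl)
  have hθ'0 : 0 ≤ max θ Θ := le_trans hθ.le (le_max_left _ _)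
  have habs : ∀ i, 1 ≤ i → |θi i - θ| ≤ max θ Θ := by
    intro i hi
    rw [abs_le]
    constructor
    · have := hnn i; have := le_max_left θ Θ; linarith
    · have := hΘle i hi; have := le_max_right θ Θ; linarith
  -- basic facts about δ
  have hδbdd : BddAbove (Set.range fun j : ℕ =>
      |(1 / (m : ℝ)) * ∑ i ∈ Icc 1 m, θi (j * m + i) - θ|) := by
    refine ⟨Θ + θ, ?_⟩
    rintro x ⟨j, rfl⟩
    show |(1 / (m : ℝ)) * ∑ i ∈ Icc 1 m, θi (j * m + i) - θ| ≤ Θ + θ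
    have hs0 : (0 : ℝ) ≤ ∑ i ∈ Icc 1 m, θi (j * m + i) :=
      Finset.sum_nonneg fun i _ => hnn _
    have hsΘ : ∑ i ∈ Icc 1 m, θi (j * m + i) ≤ (m : ℝ) * Θ := by
      have := Finset.sum_le_card_nsmul (Icc 1 m) (fun i => θi (j * m + i)) Θ
        (fun i hi => hΘle _ (by have := (Finset.mem_Icc.mp hi).1; omega))
      rwa [Nat.card_Icc, Nat.add_sub_cancel, nsmul_eq_mul] at this
    have h1 : (1 / (m : ℝ)) * ∑ i ∈ Icc 1 m, θi (j * m + i) ≤ Θ := by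
      rw [div_mul_eq_mul_div, one_mul, div_le_iff₀ hm0]
      linarith
    have h2 : (0 : ℝ) ≤ (1 / (m : ℝ)) * ∑ i ∈ Icc 1 m, θi (j * m + i) :=
      mul_nonneg (by positivity) hs0
    rw [abs_le]
    constructor <;> nlinarith
  have hδge : ∀ j : ℕ, |(1 / (m : ℝ)) * ∑ i ∈ Icc 1 m, θi (j * m + i) - θ| ≤ δ :=
    fun j => le_ciSup hδbdd j
  have hδ0 : 0 ≤ δ := (abs_nonneg _).trans (hδge 0)
  -- basic facts about Y
  have hYbdd : BddAbove (Set.range fun i => ⨆ _ : i ∈ Icc (l + 1) n, |y i|) := by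
    refine ⟨∑ i ∈ Icc (l + 1) n, |y i|, ?_⟩
    rintro x ⟨i, rfl⟩
    show (⨆ _ : i ∈ Icc (l + 1) n, |y i|) ≤ ∑ i ∈ Icc (l + 1) n, |y i|
    by_cases h : i ∈ Icc (l + 1) n
    · rw [ciSup_pos h]
      exact Finset.single_le_sum (fun j _ => abs_nonneg (y j)) h
    · haveI : IsEmpty (i ∈ Icc (l + 1) n : Prop) := isEmpty_Prop.mpr h
      rw [Real.iSup_of_isEmpty]
      exact Finset.sum_nonneg fun j _ => abs_nonneg (y j)
  have hYge : ∀ i ∈ Icc (l + 1) n, |y i| ≤ Y := fun i hi =>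
    le_trans (le_of_eq (ciSup_pos (f := fun _ => |y i|) hi).symm) (le_ciSup hYbdd i)
  have hY0 : 0 ≤ Y :=
    (abs_nonneg (y n)).trans (hYge n (Finset.mem_Icc.mpr ⟨hln, le_rfl⟩))
  -- segment bound
  have hseg : ∀ p q c : ℕ, l ≤ p → q ≤ n → q - p ≤ c →
      |∑ i ∈ Ioc p q, (θi i - θ) * y i| ≤ (c : ℝ) * max θ Θ * Y := by
    intro p q c hp hq hpq
    calc |∑ i ∈ Ioc p q, (θi i - θ) * y i|
        ≤ ∑ i ∈ Ioc p q, |(θi i - θ) * y i| := Finset.abs_sum_le_sum_abs _ _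
      _ ≤ ∑ _i ∈ Ioc p q, max θ Θ * Y := by
          refine Finset.sum_le_sum fun i hi => ?_
          obtain ⟨hi1, hi2⟩ := Finset.mem_Ioc.mp hi
          rw [abs_mul]
          exact mul_le_mul (habs i (by omega))
            (hYge i (Finset.mem_Icc.mpr ⟨by omega, by omega⟩)) (abs_nonneg _) hθ'0
      _ = ((q - p : ℕ) : ℝ) * (max θ Θ * Y) := by
          rw [Finset.sum_const, Nat.card_Ioc, nsmul_eq_mul]
      _ ≤ (c : ℝ) * max θ Θ * Y := by
          rw [mul_assoc]
          exact mul_le_mul_of_nonneg_right (by exact_mod_cast hpq)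
            (mul_nonneg hθ'0 hY0)
  obtain ⟨k, hkeq⟩ : ∃ k, n / m = k := ⟨n / m, rfl⟩
  rw [hkeq]
  obtain ⟨b, hbeq⟩ : ∃ b, l / m + 1 = b := ⟨l / m + 1, rfl⟩
  have hb1 : 1 ≤ b := hbeq ▸ Nat.le_add_left 1 (l / m)
  have hlb : l < b * m := by
    have h1 := Nat.div_add_mod l m
    have h2 := Nat.mod_lt l hm'
    calc l = m * (l / m) + l % m := h1.symm
      _ < m * (l / m) + m := by omega
      _ = b * m := by rw [← hbeq]; ring
  have hbml : b * m ≤ l + m := by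
    have h3 := Nat.div_mul_le_self l m
    calc b * m = (l / m) * m + m := by rw [← hbeq]; ring
      _ ≤ l + m := by omega
  have hkn : k * m ≤ n := by
    rw [← hkeq]; exact Nat.div_mul_le_self n m
  have hnk : n < k * m + m := by
    have h1 := Nat.div_add_mod n m
    have h2 := Nat.mod_lt n hm'
    calc n = m * (n / m) + n % m := h1.symm
      _ < m * (n / m) + m := by omega
      _ = k * m + m := by rw [← hkeq]; ring
  have hIcc : Icc (l + 1) n = Ioc l n := Finset.Icc_add_one_left_eq_Ioc l n
  -- nonnegativity of the last sum
  have htriple0 : 0 ≤ ∑ l' ∈ Icc 1 m, ∑ l'' ∈ Icc 1 m, ∑ j ∈ Icc 1 (k - 1),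
      |y (j * m + l') - y (j * m + l'')| :=
    Finset.sum_nonneg fun _ _ => Finset.sum_nonneg fun _ _ =>
      Finset.sum_nonneg fun _ _ => abs_nonneg _
  have hysum0 : 0 ≤ ∑ i ∈ Icc 1 n, |y i| := Finset.sum_nonneg fun _ _ => abs_nonneg _
  by_cases hcase : k ≤ b
  · -- no full blocks: n - l ≤ 2m
    have hnl : n - l ≤ 2 * m := by
      have h3 : k * m ≤ b * m := Nat.mul_le_mul_right m hcase
      have h4 : n < l + m + m := lt_of_lt_of_le hnk
        (le_trans (Nat.add_le_add_right h3 m) (Nat.add_le_add_right hbml m))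
      omega
    have hA := hseg l n (2 * m) le_rfl le_rfl hnl
    rw [hIcc]
    have hc : ((2 * m : ℕ) : ℝ) = 2 * (m : ℝ) := by push_cast; ring
    rw [hc] at hA
    have h1 : 0 ≤ δ * ∑ i ∈ Icc 1 n, |y i| := mul_nonneg hδ0 hysum0
    have h2 : 0 ≤ (m : ℝ)⁻¹ * Θ * ∑ l' ∈ Icc 1 m, ∑ l'' ∈ Icc 1 m,
        ∑ j ∈ Icc 1 (k - 1), |y (j * m + l') - y (j * m + l'')| :=
      mul_nonneg (mul_nonneg (by positivity) hΘ0) htriple0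
    linarith
  · push_neg at hcase  -- b < k
    have hbk : b ≤ k := hcase.le
    have hbmkm : b * m ≤ k * m := Nat.mul_le_mul_right m hbk
    have e2 : (∑ i ∈ Ioc (b * m) (k * m), (θi i - θ) * y i)
        + ∑ i ∈ Ioc (k * m) n, (θi i - θ) * y i
        = ∑ i ∈ Ioc (b * m) n, (θi i - θ) * y i :=
      Finset.sum_Ioc_consecutive _ hbmkm hkn
    have e1 : (∑ i ∈ Ioc l (b * m), (θi i - θ) * y i)
        + ∑ i ∈ Ioc (b * m) n, (θi i - θ) * y i
        = ∑ i ∈ Ioc l n, (θi i - θ) * y i :=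
      Finset.sum_Ioc_consecutive _ hlb.le (le_trans hbmkm hkn)
    have hsplit : ∑ i ∈ Icc (l + 1) n, (θi i - θ) * y i
        = (∑ i ∈ Ioc l (b * m), (θi i - θ) * y i)
          + (∑ i ∈ Ioc (b * m) (k * m), (θi i - θ) * y i)
          + ∑ i ∈ Ioc (k * m) n, (θi i - θ) * y i := by
      rw [hIcc, ← e1, ← e2]; ring
    have hfront : |∑ i ∈ Ioc l (b * m), (θi i - θ) * y i| ≤ (m : ℝ) * max θ Θ * Y :=
      hseg l (b * m) m le_rfl (le_trans hbmkm hkn) (by omega)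
    have htail : |∑ i ∈ Ioc (k * m) n, (θi i - θ) * y i| ≤ (m : ℝ) * max θ Θ * Y :=
      hseg (k * m) n m (le_trans hlb.le hbmkm) le_rfl (by omega)
    -- middle part
    have hmidsum : ∑ i ∈ Ioc (b * m) (k * m), (θi i - θ) * y i
        = ∑ j ∈ Ico b k, ∑ i ∈ Icc 1 m, (θi (j * m + i) - θ) * y (j * m + i) :=
      (sum_blocks (fun i => (θi i - θ) * y i) m b k hbk).symm
    have hmid : |∑ i ∈ Ioc (b * m) (k * m), (θi i - θ) * y i|
        ≤ δ * ∑ i ∈ Icc 1 n, |y i|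
          + (m : ℝ)⁻¹ * Θ * ∑ l' ∈ Icc 1 m, ∑ l'' ∈ Icc 1 m,
              ∑ j ∈ Icc 1 (k - 1), |y (j * m + l') - y (j * m + l'')| := by
      rw [hmidsum]
      calc |∑ j ∈ Ico b k, ∑ i ∈ Icc 1 m, (θi (j * m + i) - θ) * y (j * m + i)|
          ≤ ∑ j ∈ Ico b k, |∑ i ∈ Icc 1 m, (θi (j * m + i) - θ) * y (j * m + i)| :=
            Finset.abs_sum_le_sum_abs _ _
        _ ≤ ∑ j ∈ Ico b k, (δ * ∑ i ∈ Icc 1 m, |y (j * m + i)|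
            + (m : ℝ)⁻¹ * Θ * ∑ l' ∈ Icc 1 m, ∑ l'' ∈ Icc 1 m,
                |y (j * m + l') - y (j * m + l'')|) :=
            Finset.sum_le_sum fun j _ =>
              block_bound θ θi y m (j * m) hm' Θ hΘle hnn δ (hδge j)
        _ = δ * (∑ j ∈ Ico b k, ∑ i ∈ Icc 1 m, |y (j * m + i)|)
            + (m : ℝ)⁻¹ * Θ * ∑ j ∈ Ico b k, ∑ l' ∈ Icc 1 m, ∑ l'' ∈ Icc 1 m,
                |y (j * m + l') - y (j * m + l'')| := by
            rw [Finset.sum_add_distrib, Finset.mul_sum, Finset.mul_sum]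
        _ ≤ δ * ∑ i ∈ Icc 1 n, |y i|
            + (m : ℝ)⁻¹ * Θ * ∑ l' ∈ Icc 1 m, ∑ l'' ∈ Icc 1 m,
                ∑ j ∈ Icc 1 (k - 1), |y (j * m + l') - y (j * m + l'')| := by
            refine add_le_add ?_ ?_
            · refine mul_le_mul_of_nonneg_left ?_ hδ0
              rw [sum_blocks (fun i => |y i|) m b k hbk]
              refine Finset.sum_le_sum_of_subset_of_nonneg ?_
                (fun i _ _ => abs_nonneg (y i))
              intro i hi
              obtain ⟨h1, h2⟩ := Finset.mem_Ioc.mp hi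
              exact Finset.mem_Icc.mpr ⟨by omega, by omega⟩
            · refine mul_le_mul_of_nonneg_left ?_
                (mul_nonneg (by positivity) hΘ0)
              have hswap : ∑ j ∈ Ico b k, ∑ l' ∈ Icc 1 m, ∑ l'' ∈ Icc 1 m,
                  |y (j * m + l') - y (j * m + l'')|
                  = ∑ l' ∈ Icc 1 m, ∑ l'' ∈ Icc 1 m, ∑ j ∈ Ico b k,
                  |y (j * m + l') - y (j * m + l'')| := by
                rw [Finset.sum_comm]
                exact Finset.sum_congr rfl fun l' _ => Finset.sum_comm
              rw [hswap]
              refine Finset.sum_le_sum fun l' _ => Finset.sum_le_sum fun l'' _ => ?_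
              refine Finset.sum_le_sum_of_subset_of_nonneg ?_
                (fun j _ _ => abs_nonneg _)
              intro j hj
              obtain ⟨h1, h2⟩ := Finset.mem_Ico.mp hj
              exact Finset.mem_Icc.mpr ⟨by omega, by omega⟩
    have h2m : 2 * (m : ℝ) * max θ Θ * Y
        = (m : ℝ) * max θ Θ * Y + (m : ℝ) * max θ Θ * Y := by ring
    have htri : |∑ i ∈ Icc (l + 1) n, (θi i - θ) * y i|
        ≤ |∑ i ∈ Ioc l (b * m), (θi i - θ) * y i|
          + |∑ i ∈ Ioc (b * m) (k * m), (θi i - θ) * y i|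
          + |∑ i ∈ Ioc (k * m) n, (θi i - θ) * y i| := by
      rw [hsplit]; exact abs_add_three _ _ _
    linarith
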